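/- Let n ≥ 2, ρ_n = Σ_{i=1}^n (n−i)ε_i, and suppose Σ_{i=1}^n k_i ε_i lies in the support of 𝒜 = e^{ε_1+⋯+ε_r} ∏_{(i,j)∈U}(1 − e^{ε_i+ε_j}), where r = ⌊n/2⌋ and U = {(i,j) : 1 ≤ i < j ≤ n, i+j ≠ n+1}. Then 0 ≤ k_i ≤ n−1 for all i, k_i ≥ 1 for i ≤ r, and k_i ≤ n−2 for i ≥ n+1−r. In particular, every regular element of the support of 𝒜 lies in the S_n-orbit of ρ_n. -/

import Mathlib

set_option maxHeartbeats 1000000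

open Finset

lemma support_prod_sum {ι G : Type*} [AddCommMonoid G] [DecidableEq ι] [DecidableEq G]
    (T : Finset ι) (f : ι → AddMonoidAlgebra ℚ G) :
    ∀ k ∈ (∏ i ∈ T, f i).coeff.support, ∃ g : ι → G,
      (∀ i ∈ T, g i ∈ (f i).coeff.support) ∧ k = ∑ i ∈ T, g i := by
  induction T using Finset.induction_on with
  | empty =>
    intro k hk
    simp only [Finset.prod_empty] at hk
    have h0 := AddMonoidAlgebra.support_coeff_one_subset hk
    refine ⟨fun _ => 0, by simp, ?_⟩
    simpa using Finset.mem_zero.mp h0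
  | @insert a T ha ih =>
    intro k hk
    rw [Finset.prod_insert ha] at hk
    obtain ⟨b, hb, c, hc, rfl⟩ := Finset.mem_add.mp (AddMonoidAlgebra.support_coeff_mul_subset _ _ hk)
    obtain ⟨g, hg, rfl⟩ := ih c hc
    refine ⟨Function.update g a b, ?_, ?_⟩
    · intro i hi
      rcases Finset.mem_insert.mp hi with rfl | hiT
      · simpa using hb
      · have hne : i ≠ a := fun hia => ha (hia ▸ hiT)
        rw [Function.update_of_ne hne]
        exact hg i hiT
    · rw [Finset.sum_insert ha, Function.update_self]
      congr 1
      refine Finset.sum_congr rfl fun i hi => ?_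
      have hne : i ≠ a := fun hia => ha (hia ▸ hi)
      exact (Function.update_of_ne hne _ _).symm

lemma support_one_sub_single {G : Type*} [AddCommMonoid G] [DecidableEq G] (d : G)
    (k : G) (hk : k ∈ (1 - AddMonoidAlgebra.single d (1 : ℚ)).coeff.support) :
    k = 0 ∨ k = d := by
  have h := Finsupp.support_sub (by rw [AddMonoidAlgebra.coeff_sub] at hk; exact hk)
  rcases Finset.mem_union.mp h with h | h
  · exact Or.inl (Finset.mem_zero.mp (AddMonoidAlgebra.support_coeff_one_subset h))
  · exact Or.inr (Finset.mem_singleton.mp (Finsupp.support_single_subset h))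

/-- Support bounds for `𝒜 = e^{ε_1+⋯+ε_r} ∏_{(i,j)∈U}(1 − e^{ε_i+ε_j})` with
`r = ⌊n/2⌋` and `U = {(i,j) : 1 ≤ i < j ≤ n, i+j ≠ n+1}`: any `Σ k_i ε_i` in the
support satisfies `0 ≤ k_i ≤ n−1`, `k_i ≥ 1` for `i ≤ r` and `k_i ≤ n−2` for
`i ≥ n+1−r`; in particular every regular element of the support lies in the
`S_n`-orbit of `ρ = Σ (n−i)ε_i`. -/
theorem support_bounds (n : ℕ) (hn : 2 ≤ n) (r : ℕ) (hr : r = n / 2)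
    (ρ : Fin n → ℤ) (hρ : ρ = fun i => (n : ℤ) - 1 - (i.val : ℤ))
    (A : AddMonoidAlgebra ℚ (Fin n → ℤ))
    (hA : A = AddMonoidAlgebra.single (fun i : Fin n => if i.val < r then (1 : ℤ) else 0) 1 *
      ∏ p ∈ univ.filter
          (fun p : Fin n × Fin n => p.1 < p.2 ∧ (p.1.val + 1) + (p.2.val + 1) ≠ n + 1),
        (1 - AddMonoidAlgebra.single (Pi.single p.1 (1 : ℤ) + Pi.single p.2 1) (1 : ℚ))) :
    ∀ k ∈ A.coeff.support,
      (∀ i : Fin n, 0 ≤ k i ∧ k i ≤ (n : ℤ) - 1) ∧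
      (∀ i : Fin n, i.val < r → 1 ≤ k i) ∧
      (∀ i : Fin n, n - r ≤ i.val → k i ≤ (n : ℤ) - 2) ∧
      (Function.Injective k → ∃ w : Equiv.Perm (Fin n), k = ρ ∘ w.symm) := by
  classical
  intro k hk
  set U : Finset (Fin n × Fin n) := univ.filter
      (fun p : Fin n × Fin n => p.1 < p.2 ∧ (p.1.val + 1) + (p.2.val + 1) ≠ n + 1) with hU
  set c : Fin n → ℤ := fun i : Fin n => if i.val < r then (1 : ℤ) else 0 with hc
  rw [hA] at hk
  obtain ⟨b, hb, m, hm, hbm⟩ := Finset.mem_add.mp (AddMonoidAlgebra.support_coeff_mul_subset _ _ hk)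
  have hbc : b = c := Finset.mem_singleton.mp (Finsupp.support_single_subset hb)
  subst hbc
  obtain ⟨g, hg, rfl⟩ := support_prod_sum U _ m hm
  -- key pointwise expression
  have hki : ∀ i : Fin n, k i = c i + ∑ p ∈ U, g p i := by
    intro i
    rw [← hbm]
    simp [Finset.sum_apply']
  have hgcases : ∀ p ∈ U, g p = 0 ∨ g p = Pi.single p.1 (1 : ℤ) + Pi.single p.2 1 :=
    fun p hp => support_one_sub_single _ _ (hg p hp)
  have hg0 : ∀ p ∈ U, ∀ i : Fin n, 0 ≤ g p i := by
    intro p hp i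
    rcases hgcases p hp with h | h <;> rw [h]
    · simp
    · simp only [Pi.add_apply, Pi.single_apply]
      split_ifs <;> norm_num
  have hgle : ∀ p ∈ U, ∀ i : Fin n,
      g p i ≤ (if p.1 = i then (1:ℤ) else 0) + (if p.2 = i then 1 else 0) := by
    intro p hp i
    rcases hgcases p hp with h | h <;> rw [h]
    · simp only [Pi.zero_apply]; split_ifs <;> norm_num
    · have flip : ∀ a b : Fin n, (if a = b then (1:ℤ) else 0) ≤ if b = a then 1 else 0 := by
        intro a b
        by_cases hab : a = b
        · subst hab; simp
        · rw [if_neg hab, if_neg fun h => hab h.symm]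
      simp only [Pi.add_apply, Pi.single_apply]
      exact add_le_add (flip i p.1) (flip i p.2)
  have hSnn : ∀ i : Fin n, 0 ≤ ∑ p ∈ U, g p i :=
    fun i => Finset.sum_nonneg fun p hp => hg0 p hp i
  have hSle : ∀ i : Fin n, ∑ p ∈ U, g p i ≤
      ((U.filter fun p => p.1 = i).card : ℤ) + (U.filter fun p => p.2 = i).card := by
    intro i
    calc ∑ p ∈ U, g p i
        ≤ ∑ p ∈ U, ((if p.1 = i then (1:ℤ) else 0) + (if p.2 = i then 1 else 0)) :=
          Finset.sum_le_sum fun p hp => hgle p hp i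
      _ = _ := by rw [Finset.sum_add_distrib, Finset.sum_boole, Finset.sum_boole]
  -- cardinality bounds
  have hcard1 : ∀ i : Fin n, (U.filter fun p => p.1 = i).card ≤ n - 1 - i.val := by
    intro i
    rw [← Fin.card_Ioi i]
    apply Finset.card_le_card_of_injOn (fun p => p.2)
    · intro p (hp : p ∈ U.filter _)
      simp only [hU, Finset.mem_filter, Finset.mem_univ, true_and] at hp
      exact Finset.mem_Ioi.mpr (hp.2 ▸ hp.1.1)
    · intro p hp q hq h
      simp only [Finset.coe_filter, Set.mem_setOf_eq] at hp hq
      exact Prod.ext (hp.2.trans hq.2.symm) h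
  have hcard2 : ∀ i : Fin n, (U.filter fun p => p.2 = i).card ≤ i.val := by
    intro i
    rw [← Fin.card_Iio i]
    apply Finset.card_le_card_of_injOn (fun p => p.1)
    · intro p (hp : p ∈ U.filter _)
      simp only [hU, Finset.mem_filter, Finset.mem_univ, true_and] at hp
      exact Finset.mem_Iio.mpr (hp.2 ▸ hp.1.1)
    · intro p hp q hq h
      simp only [Finset.coe_filter, Set.mem_setOf_eq] at hp hq
      exact Prod.ext h (hp.2.trans hq.2.symm)
  have hpartner : ∀ i : Fin n, n - 1 - i.val < n := by
    intro i; omega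
  have hcard1' : ∀ i : Fin n, 2 * i.val + 2 ≤ n →
      (U.filter fun p => p.1 = i).card ≤ n - 1 - i.val - 1 := by
    intro i h2i
    have : ((Finset.Ioi i).erase ⟨n - 1 - i.val, hpartner i⟩).card = n - 1 - i.val - 1 := by
      rw [Finset.card_erase_of_mem, Fin.card_Ioi]
      exact Finset.mem_Ioi.mpr (by rw [Fin.lt_def]; simp; omega)
    rw [← this]
    apply Finset.card_le_card_of_injOn (fun p => p.2)
    · intro p (hp : p ∈ U.filter _)
      simp only [hU, Finset.mem_filter, Finset.mem_univ, true_and] at hp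
      obtain ⟨⟨hlt, hne⟩, h1⟩ := hp
      refine Finset.mem_erase.mpr ⟨?_, Finset.mem_Ioi.mpr (h1 ▸ hlt)⟩
      rw [Fin.ne_iff_vne]
      have := h1 ▸ hne
      simp only [h1] at hne ⊢
      omega
    · intro p hp q hq h
      simp only [Finset.coe_filter, Set.mem_setOf_eq] at hp hq
      exact Prod.ext (hp.2.trans hq.2.symm) h
  have hcard2' : ∀ i : Fin n, n ≤ 2 * i.val →
      (U.filter fun p => p.2 = i).card ≤ i.val - 1 := by
    intro i h2i
    have : ((Finset.Iio i).erase ⟨n - 1 - i.val, hpartner i⟩).card = i.val - 1 := by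
      rw [Finset.card_erase_of_mem, Fin.card_Iio]
      refine Finset.mem_Iio.mpr (by rw [Fin.lt_def]; simp; omega)
    rw [← this]
    apply Finset.card_le_card_of_injOn (fun p => p.1)
    · intro p (hp : p ∈ U.filter _)
      simp only [hU, Finset.mem_filter, Finset.mem_univ, true_and] at hp
      obtain ⟨⟨hlt, hne⟩, h1⟩ := hp
      refine Finset.mem_erase.mpr ⟨?_, Finset.mem_Iio.mpr (h1 ▸ hlt)⟩
      rw [Fin.ne_iff_vne]
      simp only [h1] at hne ⊢
      omega
    · intro p hp q hq h
      simp only [Finset.coe_filter, Set.mem_setOf_eq] at hp hq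
      exact Prod.ext h (hp.2.trans hq.2.symm)
  -- the three bounds
  have main : ∀ i : Fin n, 0 ≤ k i ∧ k i ≤ (n : ℤ) - 1 := by
    intro i
    have e := hki i
    have h0 := hSnn i
    have h1 := hSle i
    have hc1 := hcard1 i
    have hc2 := hcard2 i
    have hin := i.isLt
    constructor
    · have : (0:ℤ) ≤ c i := by rw [hc]; dsimp only; split_ifs <;> norm_num
      omega
    · by_cases hir : i.val < r
      · have h2i : 2 * i.val + 2 ≤ n := by omega
        have hc1' := hcard1' i h2i
        have : c i = 1 := by rw [hc]; simp [hir]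
        omega
      · have : c i = 0 := by rw [hc]; simp [hir]
        omega
  refine ⟨main, ?_, ?_, ?_⟩
  · intro i hir
    have e := hki i
    have h0 := hSnn i
    have : c i = 1 := by rw [hc]; simp [hir]
    omega
  · intro i hir
    have e := hki i
    have h1 := hSle i
    have hc1 := hcard1 i
    have hin := i.isLt
    have h2i : n ≤ 2 * i.val := by omega
    have hc2' := hcard2' i h2i
    have : c i = 0 := by rw [hc]; simp; omega
    omega
  · intro hinj
    have hval : ∀ i : Fin n, ((k i).toNat : ℤ) = k i ∧ (k i).toNat ≤ n - 1 := by
      intro i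
      have := main i
      constructor
      · exact Int.toNat_of_nonneg this.1
      · omega
    set f : Fin n → Fin n := fun i => ⟨n - 1 - (k i).toNat, by omega⟩ with hf
    have hfinj : Function.Injective f := by
      intro i j hij
      apply hinj
      have h1 := hval i
      have h2 := hval j
      have := Fin.mk.injEq _ _ _ _ ▸ hij
      rw [hf] at hij
      simp only [Fin.mk.injEq] at hij
      omega
    obtain ⟨_, hfsurj⟩ := (Finite.injective_iff_bijective.mp hfinj)
    refine ⟨(Equiv.ofBijective f ⟨hfinj, hfsurj⟩).symm, ?_⟩
    funext i
    have h1 := hval i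
    simp only [Function.comp_apply, Equiv.symm_symm, Equiv.ofBijective_apply, hρ, hf]
    have hin := i.isLt
    omega
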